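/- Any minimizer f* of the restricted sensible robust risk R̃^s_rob satisfies R_std(f*) ≤ max over Bayes rules f of P̃ of R_std(f); i.e., every sensibly robust model has true standard risk no worse than the worst-case Bayes rule fitted on the restricted distribution. -/

import Mathlib

open MeasureTheory Set
open scoped ENNReal

noncomputable def sensRisk {E : Type*} [MeasurableSpace E] [PseudoMetricSpace E] {K : ℕ}
    (μ : Measure (E × Fin K)) (ε : ℝ) (fB f : E → Fin K) : ℝ≥0∞ :=
  μ {p | (fB p.1 ≠ p.2 ∧ f p.1 ≠ p.2) ∨
         (fB p.1 = p.2 ∧ ∃ z, dist z p.1 ≤ ε ∧ fB z = p.2 ∧ f z ≠ p.2)}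

noncomputable def stdRisk {E : Type*} [MeasurableSpace E] {K : ℕ}
    (μ : Measure (E × Fin K)) (f : E → Fin K) : ℝ≥0∞ :=
  μ {p | f p.1 ≠ p.2}

/-- Corollary 1: every minimizer `f*` of the sensible robust risk under the restricted
distribution `μ̃` has true standard risk (under the full distribution `μ`) no larger
than the worst-case standard risk over the Bayes rules of `μ̃`. -/
theorem sensibly_robust_beats_worst_restricted_bayes
    {E : Type*} [MeasurableSpace E] [PseudoMetricSpace E] {K : ℕ}
    (μ : Measure (E × Fin K)) [IsProbabilityMeasure μ]
    (μt : Measure (E × Fin K)) [IsProbabilityMeasure μt] (ε : ℝ) (hε : 0 < ε)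
    (Xt : Set E)
    (hsupp : μt {p : E × Fin K | p.1 ∈ Xt} = 1)
    (η : E → Fin K → ℝ) (fB : E → Fin K)
    -- `η x k` is the conditional probability `P̃(Y = k | X = x)`:
    (hη : ∀ (k : Fin K) (A : Set E), MeasurableSet A →
      μt (A ×ˢ ({k} : Set (Fin K))) =
        ENNReal.ofReal (∫ x in A, η x k ∂(μt.map Prod.fst)))
    -- `fB` is the Bayes classifier, the argmax of `η x`, a.e. uniquely:
    (hfB : ∀ (x : E) (k : Fin K), η x k ≤ η x (fB x))
    (hUnique : ∀ᵐ x ∂(μt.map Prod.fst), ∀ k : Fin K, k ≠ fB x → η x k < η x (fB x))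
    (fstar : E → Fin K)
    -- `f*` is a minimizer of the restricted sensible robust risk:
    (hmin : ∀ g : E → Fin K, sensRisk μt ε fB fstar ≤ sensRisk μt ε fB g) :
    stdRisk μ fstar ≤
      ⨆ f : {f : E → Fin K // ∀ g : E → Fin K, stdRisk μt f ≤ stdRisk μt g},
        stdRisk μ f.1 := by
  classical
  suffices hf : ∀ g : E → Fin K, stdRisk μt fstar ≤ stdRisk μt g by
    exact le_iSup_of_le ⟨fstar, hf⟩ le_rfl
  set ν : Measure E := μt.map Prod.fst with hν
  -- basic helpers about label slices
  have hdisjoint : ∀ (f : Fin K → Set E),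
      Pairwise (Function.onFun Disjoint fun k => f k ×ˢ ({k} : Set (Fin K))) := by
    intro f k j hkj
    rw [Function.onFun, Set.disjoint_left]
    rintro ⟨x, y⟩ ⟨-, h1⟩ ⟨-, h2⟩
    simp only [mem_singleton_iff] at h1 h2
    exact hkj (h1 ▸ h2 ▸ rfl)
  have hprodmeas : ∀ (A : Set E) (k : Fin K), MeasurableSet A →
      MeasurableSet (A ×ˢ ({k} : Set (Fin K))) :=
    fun A k hA => hA.prod (measurableSet_singleton k)
  have hdecomp : ∀ (A : Set E), MeasurableSet A →
      μt (A ×ˢ (univ : Set (Fin K))) = ∑ k : Fin K, μt (A ×ˢ ({k} : Set (Fin K))) := by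
    intro A hA
    have hU : A ×ˢ (univ : Set (Fin K)) = ⋃ k : Fin K, A ×ˢ ({k} : Set (Fin K)) := by
      ext ⟨x, y⟩
      simp only [mem_prod, mem_univ, and_true, mem_iUnion, mem_singleton_iff]
      exact ⟨fun h => ⟨y, h, rfl⟩, by rintro ⟨i, h1, rfl⟩; exact h1⟩
    rw [hU, measure_iUnion (hdisjoint _) (fun k => hprodmeas A k hA), tsum_fintype]
  have htot : ∑ k : Fin K, μt ((univ : Set E) ×ˢ ({k} : Set (Fin K))) = 1 := by
    rw [← hdecomp univ MeasurableSet.univ, univ_prod_univ, measure_univ]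
  -- the set of "real" labels
  set R : Finset (Fin K) :=
    Finset.univ.filter (fun k => μt ((univ : Set E) ×ˢ ({k} : Set (Fin K))) ≠ 0) with hR
  have hRnull : ∀ k, k ∉ R → μt ((univ : Set E) ×ˢ ({k} : Set (Fin K))) = 0 := by
    intro k hk
    by_contra h
    exact hk (by rw [hR]; exact Finset.mem_filter.mpr ⟨Finset.mem_univ k, h⟩)
  have hRne : R.Nonempty := by
    rw [Finset.nonempty_iff_ne_empty]
    intro hempty
    have hz : ∑ k : Fin K, μt ((univ : Set E) ×ˢ ({k} : Set (Fin K))) = 0 :=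
      Finset.sum_eq_zero fun k _ => hRnull k (by simp [hempty])
    rw [htot] at hz; exact one_ne_zero hz
  -- integrability of η on real labels
  have hint : ∀ k ∈ R, Integrable (fun x => η x k) ν := by
    intro k hk
    by_contra hni
    have h1 := hη k univ MeasurableSet.univ
    rw [setIntegral_univ, integral_undef hni] at h1
    simp only [ENNReal.ofReal_zero] at h1
    exact (Finset.mem_filter.mp hk).2 h1
  -- measurable a.e.-versions of η on real labels
  have hmk : ∀ k, ∃ f : E → ℝ, Measurable f ∧ (k ∈ R → f =ᵐ[ν] fun x => η x k) := by
    intro k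
    by_cases hk : k ∈ R
    · have h := (hint k hk).aestronglyMeasurable
      exact ⟨h.mk _, h.stronglyMeasurable_mk.measurable, fun _ => h.ae_eq_mk.symm⟩
    · exact ⟨0, measurable_const, fun h => absurd h hk⟩
  choose ηt hηt_meas hηt_ae using hmk
  set φ : Fin K → E → ℝ≥0∞ := fun k x => ENNReal.ofReal (ηt k x) with hφ
  have hφ_meas : ∀ k, Measurable (φ k) :=
    fun k => ENNReal.measurable_ofReal.comp (hηt_meas k)
  -- the slice formula for real labels
  have hslice : ∀ k ∈ R, ∀ A : Set E, MeasurableSet A →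
      μt (A ×ˢ ({k} : Set (Fin K))) = ∫⁻ x in A, φ k x ∂ν := by
    intro k hk A hA
    have hP : MeasurableSet {x | (0:ℝ) < ηt k x} :=
      measurableSet_lt measurable_const (hηt_meas k)
    set P := {x | (0:ℝ) < ηt k x} with hPdef
    have hintA : ∀ B : Set E, ∫ x in B, η x k ∂ν = ∫ x in B, ηt k x ∂ν := by
      intro B
      exact integral_congr_ae (ae_restrict_of_ae ((hηt_ae k hk).symm))
    have hzero : μt ((A \ P) ×ˢ ({k} : Set (Fin K))) = 0 := by
      rw [hη k _ (hA.diff hP), hintA]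
      refine ENNReal.ofReal_eq_zero.mpr ?_
      exact setIntegral_nonpos (hA.diff hP) (fun x hx => not_lt.mp hx.2)
    have hzero' : ∫⁻ x in A \ P, φ k x ∂ν = 0 := by
      have he : ∫⁻ x in A \ P, φ k x ∂ν = ∫⁻ x in A \ P, 0 ∂ν := by
        refine setLIntegral_congr_fun_ae (hA.diff hP) (ae_of_all _ (fun x hx => ?_))
        simp only [hφ]
        exact ENNReal.ofReal_eq_zero.mpr (not_lt.mp hx.2)
      simpa using he
    have hpos : μt ((A ∩ P) ×ˢ ({k} : Set (Fin K))) = ∫⁻ x in A ∩ P, φ k x ∂ν := by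
      rw [hη k _ (hA.inter hP), hintA]
      have hInt : Integrable (ηt k) (ν.restrict (A ∩ P)) :=
        ((hint k hk).congr (hηt_ae k hk).symm).integrableOn
      have hnn : 0 ≤ᵐ[ν.restrict (A ∩ P)] ηt k :=
        (ae_restrict_iff' (hA.inter hP)).2 (ae_of_all _ fun x hx => le_of_lt hx.2)
      exact ofReal_integral_eq_lintegral_ofReal hInt hnn
    have hdisj2 : Disjoint ((A ∩ P) ×ˢ ({k} : Set (Fin K))) ((A \ P) ×ˢ ({k} : Set (Fin K))) := by
      rw [Set.disjoint_left]
      rintro ⟨x, y⟩ ⟨hx1, -⟩ ⟨hx2, -⟩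
      exact hx2.2 hx1.2
    have hdisj3 : Disjoint (A ∩ P) (A \ P) := by
      rw [Set.disjoint_left]
      exact fun x hx1 hx2 => hx2.2 hx1.2
    calc μt (A ×ˢ ({k} : Set (Fin K)))
        = μt ((A ∩ P) ×ˢ ({k} : Set (Fin K))) + μt ((A \ P) ×ˢ ({k} : Set (Fin K))) := by
          rw [← measure_union hdisj2 (hprodmeas _ k (hA.diff hP)), ← union_prod, inter_union_diff]
      _ = ∫⁻ x in A ∩ P, φ k x ∂ν + ∫⁻ x in A \ P, φ k x ∂ν := by rw [hpos, hzero, hzero']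
      _ = ∫⁻ x in A, φ k x ∂ν := by
          rw [← lintegral_union (hA.diff hP) hdisj3, inter_union_diff]
  -- the max function
  set M : E → ℝ≥0∞ := fun x => R.sup (fun k => φ k x) with hM
  have hM_meas : Measurable M := by
    have he : M = fun x => ⨆ k ∈ R, φ k x := by
      funext x; rw [hM]; exact Finset.sup_eq_iSup _ _
    rw [he]
    exact Measurable.iSup (fun k => Measurable.iSup (fun _ => hφ_meas k))
  have hMatt : ∀ x, ∃ k ∈ R, φ k x = M x := by
    intro x
    obtain ⟨k, hk, hke⟩ := Finset.exists_mem_eq_sup R hRne (fun k => φ k x)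
    exact ⟨k, hk, by simp only [hM]; exact hke.symm⟩
  have hφ_le_M : ∀ (k), k ∈ R → ∀ x, φ k x ≤ M x := fun k hk x => by
    simp only [hM]; exact Finset.le_sup (f := fun j => φ j x) hk
  -- null sets
  set NA : Set E := {x | M x = 0} with hNA
  have hNA_meas : MeasurableSet NA := hM_meas (measurableSet_singleton 0)
  have hνA : ∀ A : Set E, MeasurableSet A → ν A = μt (A ×ˢ (univ : Set (Fin K))) := by
    intro A hA
    rw [hν, Measure.map_apply measurable_fst hA]
    congr 1
    ext ⟨x, y⟩; simp
  have hNA_null : ν NA = 0 := by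
    rw [hνA NA hNA_meas, hdecomp NA hNA_meas]
    apply Finset.sum_eq_zero
    intro k _
    by_cases hk : k ∈ R
    · rw [hslice k hk NA hNA_meas]
      have he : ∫⁻ x in NA, φ k x ∂ν = ∫⁻ x in NA, 0 ∂ν := by
        refine setLIntegral_congr_fun_ae hNA_meas (ae_of_all _ fun x hx => ?_)
        exact le_antisymm (hx ▸ hφ_le_M k hk x) zero_le
      simpa using he
    · exact le_antisymm
        (le_trans (measure_mono (prod_mono_left (subset_univ _))) (le_of_eq (hRnull k hk)))
        zero_le
  have hbadU_null : ν {x | ¬ ∀ k : Fin K, k ≠ fB x → η x k < η x (fB x)} = 0 :=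
    ae_iff.mp hUnique
  set N0 : Set E := toMeasurable ν
      ({x | ¬ ∀ k : Fin K, k ≠ fB x → η x k < η x (fB x)} ∪ NA ∪
        ⋃ k, ⋃ (_ : k ∈ R), {x | ηt k x ≠ η x k}) with hN0
  have hN0_meas : MeasurableSet N0 := measurableSet_toMeasurable _ _
  have hN0_null : ν N0 = 0 := by
    rw [hN0, measure_toMeasurable]
    refine measure_union_null (measure_union_null hbadU_null hNA_null) ?_
    refine measure_iUnion_null fun k => measure_iUnion_null fun hk => ?_
    exact ae_iff.mp (hηt_ae k hk)
  have hN0_sub : ({x | ¬ ∀ k : Fin K, k ≠ fB x → η x k < η x (fB x)} ∪ NA ∪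
        ⋃ k, ⋃ (_ : k ∈ R), {x | ηt k x ≠ η x k}) ⊆ N0 := subset_toMeasurable _ _
  -- key pointwise facts off N0
  have hkey : ∀ x, x ∉ N0 → fB x ∈ R →
      φ (fB x) x = M x ∧ ∀ k ∈ R, k ≠ fB x → φ k x < M x := by
    intro x hx hfBR
    have hxsub : ∀ h, ¬ (h ∈ ({x | ¬ ∀ k : Fin K, k ≠ fB x → η x k < η x (fB x)} : Set E)) → True := fun _ _ => trivial
    have hx1 : ∀ k : Fin K, k ≠ fB x → η x k < η x (fB x) := by
      by_contra h
      exact hx (hN0_sub (Or.inl (Or.inl h)))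
    have hx2 : M x ≠ 0 := by
      intro h
      exact hx (hN0_sub (Or.inl (Or.inr h)))
    have hx3 : ∀ k ∈ R, ηt k x = η x k := by
      intro k hk
      by_contra h
      exact hx (hN0_sub (Or.inr (mem_iUnion.mpr ⟨k, mem_iUnion.mpr ⟨hk, h⟩⟩)))
    have hfb_eq : φ (fB x) x = ENNReal.ofReal (η x (fB x)) := by
      simp only [hφ]; rw [hx3 _ hfBR]
    have hub : ∀ k ∈ R, φ k x ≤ φ (fB x) x := by
      intro k hk
      rcases eq_or_ne k (fB x) with rfl | hne
      · exact le_rfl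
      · calc φ k x = ENNReal.ofReal (η x k) := by simp only [hφ]; rw [hx3 k hk]
          _ ≤ ENNReal.ofReal (η x (fB x)) := ENNReal.ofReal_le_ofReal (le_of_lt (hx1 k hne))
          _ = φ (fB x) x := hfb_eq.symm
    have hMeq : M x = φ (fB x) x := le_antisymm (Finset.sup_le hub) (hφ_le_M _ hfBR x)
    refine ⟨hMeq.symm, ?_⟩
    intro k hk hne
    have hpos : 0 < η x (fB x) := by
      by_contra hle
      push_neg at hle
      exact hx2 (by rw [hMeq, hfb_eq, ENNReal.ofReal_eq_zero.mpr hle])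
    have hφk : φ k x = ENNReal.ofReal (η x k) := by simp only [hφ]; rw [hx3 k hk]
    rw [hMeq, hfb_eq, hφk]
    exact (ENNReal.ofReal_lt_ofReal_iff hpos).mpr (hx1 k hne)
  -- the competitor classifier
  have hfilter_ne : ∀ x, (R.filter (fun k => φ k x = M x)).Nonempty := by
    intro x
    obtain ⟨k, hk, he⟩ := hMatt x
    exact ⟨k, Finset.mem_filter.mpr ⟨hk, he⟩⟩
  set h0 : E → Fin K := fun x =>
    if x ∈ N0 then fB x else (R.filter (fun k => φ k x = M x)).min' (hfilter_ne x) with hh0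
  have hP1 : ∀ x, fB x ∈ R → h0 x = fB x := by
    intro x hfBR
    by_cases hx : x ∈ N0
    · simp only [hh0, hx, if_true]
    · simp only [hh0, hx, if_false]
      obtain ⟨heq, hlt⟩ := hkey x hx hfBR
      have hmem := Finset.min'_mem (R.filter (fun k => φ k x = M x)) (hfilter_ne x)
      rw [Finset.mem_filter] at hmem
      by_contra hne
      exact absurd hmem.2 (ne_of_lt (hlt _ hmem.1 hne))
  -- the covering sets
  set B : Fin K → Set E := fun k =>
    ({x | φ k x < M x} ∪ ⋃ j, ⋃ (_ : j ∈ R.filter (· < k)), {x | φ j x = M x}) ∪ N0 with hB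
  have hB_meas : ∀ k, MeasurableSet (B k) := by
    intro k
    refine MeasurableSet.union (MeasurableSet.union ?_ ?_) hN0_meas
    · exact measurableSet_lt (hφ_meas k) hM_meas
    · refine MeasurableSet.iUnion fun j => MeasurableSet.iUnion fun hj => ?_
      have hjR : j ∈ R := (Finset.mem_filter.mp hj).1
      have he : {x | φ j x = M x} = {x | M x ≤ φ j x} := by
        ext x
        exact ⟨fun h => le_of_eq h.symm, fun h => le_antisymm (hφ_le_M j hjR x) h⟩
      rw [he]
      exact measurableSet_le hM_meas (hφ_meas j)
  have hcover : ∀ k ∈ R, ∀ x, fB x ≠ k → h0 x ≠ k → x ∈ B k := by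
    intro k hkR x hfBk hh0k
    by_cases hx : x ∈ N0
    · exact Or.inr hx
    refine Or.inl ?_
    by_contra hcon
    simp only [mem_union, mem_setOf_eq, mem_iUnion, not_or, not_exists] at hcon
    obtain ⟨hc1, hc2⟩ := hcon
    have hφkM : φ k x = M x := le_antisymm (hφ_le_M k hkR x) (not_lt.mp hc1)
    by_cases hfBR : fB x ∈ R
    · exact absurd hφkM (ne_of_lt ((hkey x hx hfBR).2 k hkR (Ne.symm (Ne.symm hfBk)).symm))
    · have hxh0 : h0 x = (R.filter (fun j => φ j x = M x)).min' (hfilter_ne x) := by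
        simp only [hh0, hx, if_false]
      set m := (R.filter (fun j => φ j x = M x)).min' (hfilter_ne x) with hm
      have hmmem := Finset.min'_mem (R.filter (fun j => φ j x = M x)) (hfilter_ne x)
      rw [Finset.mem_filter] at hmmem
      have hmk : m ≤ k :=
        Finset.min'_le _ k (Finset.mem_filter.mpr ⟨hkR, hφkM⟩)
      have hnotlt : ¬ m < k := by
        intro hlt
        exact hc2 m (Finset.mem_filter.mpr ⟨hmmem.1, hlt⟩) hmmem.2
      have : m = k := le_antisymm hmk (not_lt.mp hnotlt)
      exact hh0k (hxh0.trans this)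
  have hBexcl : ∀ x, x ∉ N0 → ∃ k ∈ R, x ∉ B k ∧ φ k x = M x := by
    intro x hx
    set k0 := (R.filter (fun j => φ j x = M x)).min' (hfilter_ne x) with hk0
    have hk0mem := Finset.min'_mem (R.filter (fun j => φ j x = M x)) (hfilter_ne x)
    rw [Finset.mem_filter] at hk0mem
    refine ⟨k0, hk0mem.1, ?_, hk0mem.2⟩
    intro hmem
    rcases hmem with hmem | hmem
    · rcases hmem with hmem | hmem
      · rw [mem_setOf_eq, hk0mem.2] at hmem
        exact lt_irrefl _ hmem
      · simp only [mem_iUnion] at hmem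
        obtain ⟨j, hj, hje⟩ := hmem
        rw [Finset.mem_filter] at hj
        have : k0 ≤ j := Finset.min'_le _ j (Finset.mem_filter.mpr ⟨hj.1, hje⟩)
        exact absurd hj.2 (not_lt.mpr this)
    · exact hx hmem
  -- standard risk of fstar is below its sensible risk
  have h0std : stdRisk μt fstar ≤ sensRisk μt ε fB fstar := by
    apply measure_mono
    rintro ⟨x, y⟩ hp
    simp only [mem_setOf_eq] at hp ⊢
    by_cases hfb : fB x = y
    · exact Or.inr ⟨hfb, x, by rw [dist_self]; exact hε.le, hfb, hp⟩
    · exact Or.inl ⟨hfb, hp⟩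
  -- sensible risk of h0 is controlled
  have hsens : sensRisk μt ε fB h0 ≤ ∑ k ∈ R, ∫⁻ x in B k, φ k x ∂ν := by
    have hsub : {p : E × Fin K | (fB p.1 ≠ p.2 ∧ h0 p.1 ≠ p.2) ∨
        (fB p.1 = p.2 ∧ ∃ z, dist z p.1 ≤ ε ∧ fB z = p.2 ∧ h0 z ≠ p.2)} ⊆
        ⋃ k : Fin K, ((if k ∈ R then B k else univ) ×ˢ ({k} : Set (Fin K))) := by
      rintro ⟨x, y⟩ hp
      refine mem_iUnion.mpr ⟨y, ?_, rfl⟩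
      by_cases hyR : y ∈ R
      · simp only [hyR, if_true]
        simp only [mem_setOf_eq] at hp
        rcases hp with ⟨h1, h2⟩ | ⟨h1, z, hz1, hz2, hz3⟩
        · exact hcover y hyR x h1 h2
        · have := hP1 z (by rw [hz2]; exact hyR)
          rw [this] at hz3
          exact absurd hz2 hz3
      · simp only [hyR, if_false]
        exact mem_univ x
    calc sensRisk μt ε fB h0
        ≤ μt (⋃ k : Fin K, ((if k ∈ R then B k else univ) ×ˢ ({k} : Set (Fin K)))) :=
          measure_mono hsub
      _ ≤ ∑' k : Fin K, μt ((if k ∈ R then B k else univ) ×ˢ ({k} : Set (Fin K))) :=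
          measure_iUnion_le _
      _ = ∑ k : Fin K, μt ((if k ∈ R then B k else univ) ×ˢ ({k} : Set (Fin K))) :=
          tsum_fintype _
      _ = ∑ k ∈ R, μt ((if k ∈ R then B k else univ) ×ˢ ({k} : Set (Fin K)))
          + ∑ k ∈ Finset.univ.filter (fun k => ¬ k ∈ R),
              μt ((if k ∈ R then B k else univ) ×ˢ ({k} : Set (Fin K))) := by
          rw [← Finset.sum_filter_add_sum_filter_not Finset.univ (fun k => k ∈ R), Finset.filter_univ_mem]
      _ = ∑ k ∈ R, ∫⁻ x in B k, φ k x ∂ν := by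
          have hzero : ∑ k ∈ Finset.univ.filter (fun k => ¬ k ∈ R),
              μt ((if k ∈ R then B k else univ) ×ˢ ({k} : Set (Fin K))) = 0 := by
            refine Finset.sum_eq_zero fun k hk => ?_
            have hknR : k ∉ R := (Finset.mem_filter.mp hk).2
            simp only [hknR, if_false]
            exact hRnull k hknR
          rw [hzero, add_zero]
          refine Finset.sum_congr rfl fun k hk => ?_
          simp only [hk, if_true]
          exact hslice k hk (B k) (hB_meas k)
  -- finiteness of the integral of M
  have hMfin : ∫⁻ x, M x ∂ν ≠ ⊤ := by
    have h1 : ∀ x, M x ≤ ∑ k ∈ R, φ k x := fun x => by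
      rw [hM]
      exact Finset.sup_le (fun k hk =>
        Finset.single_le_sum (f := fun j => φ j x) (fun i _ => zero_le) hk)
    have h2 : ∫⁻ x, M x ∂ν ≤ 1 := by
      calc ∫⁻ x, M x ∂ν ≤ ∫⁻ x, ∑ k ∈ R, φ k x ∂ν := lintegral_mono h1
        _ = ∑ k ∈ R, ∫⁻ x, φ k x ∂ν := lintegral_finset_sum _ (fun k _ => hφ_meas k)
        _ = ∑ k ∈ R, μt ((univ : Set E) ×ˢ ({k} : Set (Fin K))) := by
            refine Finset.sum_congr rfl fun k hk => ?_
            rw [hslice k hk univ MeasurableSet.univ, setLIntegral_univ]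
        _ ≤ ∑ k : Fin K, μt ((univ : Set E) ×ˢ ({k} : Set (Fin K))) :=
            Finset.sum_le_sum_of_subset (Finset.subset_univ R)
        _ = 1 := htot
    exact ne_top_of_le_ne_top ENNReal.one_ne_top h2
  -- pointwise inequality on the B side
  have hptL : ∀ᵐ x ∂ν, (∑ k ∈ R, (B k).indicator (φ k) x) + M x ≤ ∑ k ∈ R, φ k x := by
    have hae : ∀ᵐ x ∂ν, x ∉ N0 := measure_eq_zero_iff_ae_notMem.mp hN0_null
    filter_upwards [hae] with x hx
    obtain ⟨k0, hk0R, hk0B, hk0M⟩ := hBexcl x hx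
    have hsum : ∑ k ∈ R, (B k).indicator (φ k) x ≤ ∑ k ∈ R.erase k0, φ k x := by
      rw [← Finset.add_sum_erase R (fun k => (B k).indicator (φ k) x) hk0R,
        Set.indicator_of_notMem hk0B, zero_add]
      exact Finset.sum_le_sum (fun k _ => Set.indicator_le_self _ _ x)
    calc (∑ k ∈ R, (B k).indicator (φ k) x) + M x
        ≤ (∑ k ∈ R.erase k0, φ k x) + φ k0 x := add_le_add hsum (le_of_eq hk0M.symm)
      _ = ∑ k ∈ R, φ k x := by
          rw [add_comm]; exact Finset.add_sum_erase R (fun k => φ k x) hk0R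
  -- now the g-dependent part
  intro g
  set Wg : Set (E × Fin K) := toMeasurable μt {p : E × Fin K | g p.1 ≠ p.2} with hWg
  have hWg_meas : MeasurableSet Wg := measurableSet_toMeasurable _ _
  set S : Fin K → Set E := fun k => {x | (x, k) ∈ Wg} with hS
  have hS_meas : ∀ k, MeasurableSet (S k) := fun k => measurable_prodMk_right hWg_meas
  have hS_sub : ∀ k x, g x ≠ k → x ∈ S k := fun k x h =>
    subset_toMeasurable _ _ (by exact h)
  have hstdg : ∑ k ∈ R, ∫⁻ x in S k, φ k x ∂ν ≤ stdRisk μt g := by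
    have h1 : (⋃ k ∈ R, S k ×ˢ ({k} : Set (Fin K))) ⊆ Wg := by
      rintro ⟨x, y⟩ hp
      simp only [mem_iUnion] at hp
      obtain ⟨k, hk, hx, hy⟩ := hp
      simp only [mem_singleton_iff] at hy
      subst hy
      exact hx
    have hpd : (↑R : Set (Fin K)).PairwiseDisjoint (fun k => S k ×ˢ ({k} : Set (Fin K))) :=
      fun a _ b _ hab => hdisjoint S hab
    calc ∑ k ∈ R, ∫⁻ x in S k, φ k x ∂ν
        = ∑ k ∈ R, μt (S k ×ˢ ({k} : Set (Fin K))) :=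
          Finset.sum_congr rfl fun k hk => (hslice k hk _ (hS_meas k)).symm
      _ = μt (⋃ k ∈ R, S k ×ˢ ({k} : Set (Fin K))) :=
          (measure_biUnion_finset hpd (fun k _ => hprodmeas _ k (hS_meas k))).symm
      _ ≤ μt Wg := measure_mono h1
      _ = stdRisk μt g := measure_toMeasurable _
  -- pointwise inequality on the S side
  have hptG : ∀ x, (∑ k ∈ R, φ k x) ≤ (∑ k ∈ R, (S k).indicator (φ k) x) + M x := by
    intro x
    have hterm : ∀ k ∈ R, φ k x ≤ (S k).indicator (φ k) x + (if x ∈ S k then 0 else φ k x) := by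
      intro k _
      by_cases hxk : x ∈ S k
      · simp [Set.indicator_of_mem hxk, hxk]
      · simp [Set.indicator_of_notMem hxk, hxk]
    calc ∑ k ∈ R, φ k x
        ≤ ∑ k ∈ R, ((S k).indicator (φ k) x + (if x ∈ S k then 0 else φ k x)) :=
          Finset.sum_le_sum hterm
      _ = (∑ k ∈ R, (S k).indicator (φ k) x) + ∑ k ∈ R, (if x ∈ S k then 0 else φ k x) :=
          Finset.sum_add_distrib
      _ ≤ (∑ k ∈ R, (S k).indicator (φ k) x) + M x := by
          refine add_le_add_right ?_ _
          have hz : ∀ k ∈ R, k ≠ g x → (if x ∈ S k then 0 else φ k x) = 0 := by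
            intro k _ hkg
            have hxk : x ∈ S k := hS_sub k x (Ne.symm hkg)
            simp [hxk]
          by_cases hg : g x ∈ R
          · rw [Finset.sum_eq_single_of_mem (g x) hg (fun k hk hkg => hz k hk hkg)]
            by_cases hxg : x ∈ S (g x)
            · simp [hxg]
            · simp only [hxg, if_false]
              exact hφ_le_M _ hg x
          · rw [Finset.sum_eq_zero (fun k hk => hz k hk (fun h => hg (h ▸ hk)))]
            exact zero_le
  -- compare the two sums of integrals
  have hcomp : ∑ k ∈ R, ∫⁻ x in B k, φ k x ∂ν ≤ ∑ k ∈ R, ∫⁻ x in S k, φ k x ∂ν := by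
    have e1 : ∑ k ∈ R, ∫⁻ x in B k, φ k x ∂ν
        = ∫⁻ x, ∑ k ∈ R, (B k).indicator (φ k) x ∂ν := by
      rw [lintegral_finset_sum _ (fun k _ => (hφ_meas k).indicator (hB_meas k))]
      exact Finset.sum_congr rfl fun k hk => (lintegral_indicator (hB_meas k) _).symm
    have e2 : ∑ k ∈ R, ∫⁻ x in S k, φ k x ∂ν
        = ∫⁻ x, ∑ k ∈ R, (S k).indicator (φ k) x ∂ν := by
      rw [lintegral_finset_sum _ (fun k _ => (hφ_meas k).indicator (hS_meas k))]
      exact Finset.sum_congr rfl fun k hk => (lintegral_indicator (hS_meas k) _).symm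
    rw [e1, e2]
    have h3 : (∫⁻ x, ∑ k ∈ R, (B k).indicator (φ k) x ∂ν) + ∫⁻ x, M x ∂ν
        ≤ (∫⁻ x, ∑ k ∈ R, (S k).indicator (φ k) x ∂ν) + ∫⁻ x, M x ∂ν := by
      rw [← lintegral_add_right _ hM_meas, ← lintegral_add_right _ hM_meas]
      calc ∫⁻ x, (∑ k ∈ R, (B k).indicator (φ k) x) + M x ∂ν
          ≤ ∫⁻ x, ∑ k ∈ R, φ k x ∂ν := lintegral_mono_ae hptL
        _ ≤ ∫⁻ x, (∑ k ∈ R, (S k).indicator (φ k) x) + M x ∂ν := lintegral_mono hptG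
    exact (ENNReal.add_le_add_iff_right hMfin).mp h3
  -- put everything together
  calc stdRisk μt fstar
      ≤ sensRisk μt ε fB fstar := h0std
    _ ≤ sensRisk μt ε fB h0 := hmin h0
    _ ≤ ∑ k ∈ R, ∫⁻ x in B k, φ k x ∂ν := hsens
    _ ≤ ∑ k ∈ R, ∫⁻ x in S k, φ k x ∂ν := hcomp
    _ ≤ stdRisk μt g := hstdg
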